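/- Let f ∈ F_∞ and let X solve the ODE Ẍ + (3/t)Ẋ + ∇f(X) = 0 for t > 0 with X(0) = x₀ and Ẋ(0) = 0 (X being C² on (0,∞) and C¹ on [0,∞)). If the limit of Ẍ(t) as t → 0⁺ exists, then this limit equals −∇f(x₀)/4; consequently X(t) = x₀ − (t²/8)·∇f(x₀) + o(t²) as t → 0⁺. -/

import Mathlib

open Set Filter Topology Asymptotics

noncomputable section

abbrev E (n : ℕ) := EuclideanSpace ℝ (Fin n)

def MemFL (n : ℕ) (L : ℝ) (f : E n → ℝ) : Prop :=
  ConvexOn ℝ Set.univ f ∧ ContDiff ℝ 1 f ∧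
    ∀ x y, ‖gradient f x - gradient f y‖ ≤ L * ‖x - y‖

def MemFInf (n : ℕ) (f : E n → ℝ) : Prop := ∃ L > 0, MemFL n L f

def NesterovSol (n : ℕ) (f : E n → ℝ) (x0 : E n) (X : ℝ → E n) : Prop :=
  X 0 = x0 ∧
  ContDiffOn ℝ 1 X (Set.Ici 0) ∧
  ContDiffOn ℝ 2 X (Set.Ioi 0) ∧
  derivWithin X (Set.Ici 0) 0 = 0 ∧
  ∀ t > (0:ℝ), deriv (deriv X) t + (3 / t) • deriv X t + gradient f (X t) = 0

/-- **Initial asymptotics.** If the acceleration `Ẍ(t)` of the Nesterov ODE solution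
converges as `t → 0⁺`, its limit is `-∇f(x₀)/4`, and consequently
`X(t) = x₀ - (t²/8)∇f(x₀) + o(t²)` as `t → 0⁺`. -/
theorem nesterov_ode_initial_asymptotic (n : ℕ) (f : E n → ℝ) (hf : MemFInf n f)
    (x0 : E n) (X : ℝ → E n) (hX : NesterovSol n f x0 X)
    (A : E n) (hA : Tendsto (fun t => deriv (deriv X) t) (𝓝[>] (0:ℝ)) (𝓝 A)) :
    A = -(1 / 4 : ℝ) • gradient f x0 ∧
    (fun t : ℝ => X t - x0 + (t ^ 2 / 8) • gradient f x0) =o[𝓝[>] (0:ℝ)]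
      fun t : ℝ => t ^ 2 := by
  obtain ⟨X0, hC1, hC2, hD0, hODE⟩ := hX
  obtain ⟨L, hL, _hconv, _hfc, hlip⟩ := hf
  set g := gradient f x0 with hg
  -- continuity of the gradient
  have hgradcont : Continuous (gradient f) := by
    have : LipschitzWith (Real.toNNReal L) (gradient f) := by
      apply LipschitzWith.of_dist_le_mul
      intro x y
      rw [dist_eq_norm, dist_eq_norm]
      calc ‖gradient f x - gradient f y‖ ≤ L * ‖x - y‖ := hlip x y
        _ = (Real.toNNReal L : ℝ) * ‖x - y‖ := by
            rw [Real.coe_toNNReal L hL.le]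
    exact this.continuous
  -- derivWithin = deriv on Ioi 0
  have hdw : ∀ t : ℝ, 0 < t → derivWithin X (Set.Ici 0) t = deriv X t := by
    intro t ht
    exact derivWithin_of_mem_nhds (mem_of_superset (isOpen_Ioi.mem_nhds ht) Ioi_subset_Ici_self)
  -- deriv X → 0 at 0⁺
  have hd0 : Tendsto (deriv X) (𝓝[>] (0:ℝ)) (𝓝 0) := by
    have hcont : ContinuousOn (derivWithin X (Set.Ici 0)) (Set.Ici 0) :=
      hC1.continuousOn_derivWithin (uniqueDiffOn_Ici 0) le_rfl
    have h0 := (hcont 0 self_mem_Ici).tendsto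
    rw [hD0] at h0
    have h2 : Tendsto (derivWithin X (Set.Ici 0)) (𝓝[>] (0:ℝ)) (𝓝 0) :=
      h0.mono_left (nhdsWithin_mono 0 Ioi_subset_Ici_self)
    refine h2.congr' ?_
    filter_upwards [self_mem_nhdsWithin] with t ht
    exact hdw t ht
  -- X → x0 at 0⁺
  have hX0 : Tendsto X (𝓝[>] (0:ℝ)) (𝓝 x0) := by
    have h0 := (hC1.continuousOn 0 self_mem_Ici).tendsto
    rw [X0] at h0
    exact h0.mono_left (nhdsWithin_mono 0 Ioi_subset_Ici_self)
  -- HasDerivAt facts on Ioi 0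
  have hXd : ∀ t : ℝ, 0 < t → HasDerivAt X (deriv X t) t := by
    intro t ht
    exact ((hC2.differentiableOn two_ne_zero).differentiableAt
      (isOpen_Ioi.mem_nhds ht)).hasDerivAt
  have hC2' : ContDiffOn ℝ 1 (deriv X) (Set.Ioi 0) :=
    hC2.deriv_of_isOpen isOpen_Ioi (show (1:WithTop ℕ∞) + 1 ≤ 2 by norm_num)
  have hdd : ∀ t : ℝ, 0 < t → HasDerivAt (deriv X) (deriv (deriv X) t) t := by
    intro t ht
    exact ((hC2'.differentiableOn one_ne_zero).differentiableAt
      (isOpen_Ioi.mem_nhds ht)).hasDerivAt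
  -- key quantitative estimate
  have key : ∀ ε : ℝ, 0 < ε → ∃ δ > (0:ℝ), ∀ t : ℝ, 0 < t → t < δ →
      ‖deriv X t - t • A‖ ≤ ε * t ∧ ‖X t - x0 - (t ^ 2 / 2) • A‖ ≤ ε * t ^ 2 := by
    intro ε hε
    obtain ⟨δ, hδ, hball⟩ := Metric.tendsto_nhdsWithin_nhds.mp hA ε hε
    have hbound : ∀ u : ℝ, 0 < u → u < δ → ‖deriv (deriv X) u - A‖ ≤ ε := by
      intro u hu huδ
      have := hball (x := u) hu (by rwa [Real.dist_eq, sub_zero, abs_of_pos hu])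
      rw [dist_eq_norm] at this
      exact this.le
    have claim1 : ∀ t : ℝ, 0 < t → t < δ → ‖deriv X t - t • A‖ ≤ ε * t := by
      intro t ht htδ
      have mvt : ∀ s : ℝ, 0 < s → s < t →
          ‖(deriv X t - t • A) - (deriv X s - s • A)‖ ≤ ε * (t - s) := by
        intro s hs hst
        have hder : ∀ u ∈ Set.Icc s t,
            HasDerivWithinAt (fun u : ℝ => deriv X u - u • A)
              (deriv (deriv X) u - A) (Set.Icc s t) u := by
          intro u hu
          have h1 : HasDerivAt (fun u : ℝ => deriv X u - u • A)
              (deriv (deriv X) u - (1:ℝ) • A) u :=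
            (hdd u (lt_of_lt_of_le hs hu.1)).sub ((hasDerivAt_id u).smul_const A)
          simpa using h1.hasDerivWithinAt
        have hbd : ∀ u ∈ Set.Icc s t, ‖deriv (deriv X) u - A‖ ≤ ε := by
          intro u hu
          exact hbound u (lt_of_lt_of_le hs hu.1) (lt_of_le_of_lt hu.2 htδ)
        have := (convex_Icc s t).norm_image_sub_le_of_norm_hasDerivWithin_le hder hbd
          (Set.left_mem_Icc.2 (le_of_lt hst)) (Set.right_mem_Icc.2 (le_of_lt hst))
        rwa [Real.norm_eq_abs, abs_of_pos (sub_pos.2 hst)] at this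
      -- take limit s → 0⁺
      have hlhs : Tendsto (fun s : ℝ => ‖(deriv X t - t • A) - (deriv X s - s • A)‖)
          (𝓝[>] (0:ℝ)) (𝓝 ‖deriv X t - t • A‖) := by
        have hsA : Tendsto (fun s : ℝ => deriv X s - s • A) (𝓝[>] (0:ℝ)) (𝓝 0) := by
          have h2 : Tendsto (fun s : ℝ => s • A) (𝓝[>] (0:ℝ)) (𝓝 ((0:ℝ) • A)) :=
            ((continuous_id.smul continuous_const).tendsto 0).mono_left nhdsWithin_le_nhds
          simpa using hd0.sub h2
        have := (tendsto_const_nhds (x := deriv X t - t • A)).sub hsA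
        simpa using (this.norm)
      have hrhs : Tendsto (fun s : ℝ => ε * (t - s)) (𝓝[>] (0:ℝ)) (𝓝 (ε * t)) := by
        have : Tendsto (fun s : ℝ => ε * (t - s)) (𝓝 (0:ℝ)) (𝓝 (ε * (t - 0))) :=
          (tendsto_const_nhds.mul (tendsto_const_nhds.sub tendsto_id))
        simpa using this.mono_left nhdsWithin_le_nhds
      refine le_of_tendsto_of_tendsto hlhs hrhs ?_
      filter_upwards [Ioo_mem_nhdsGT_of_mem (Set.left_mem_Ico.2 ht)] with s hs
      exact mvt s hs.1 hs.2
    refine ⟨δ, hδ, fun t ht htδ => ⟨claim1 t ht htδ, ?_⟩⟩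
    -- second claim
    have mvt2 : ∀ s : ℝ, 0 < s → s < t →
        ‖(X t - x0 - (t ^ 2 / 2) • A) - (X s - x0 - (s ^ 2 / 2) • A)‖
          ≤ (ε * t) * (t - s) := by
      intro s hs hst
      have hder : ∀ u ∈ Set.Icc s t,
          HasDerivWithinAt (fun u : ℝ => X u - x0 - (u ^ 2 / 2) • A)
            (deriv X u - u • A) (Set.Icc s t) u := by
        intro u hu
        have hpow : HasDerivAt (fun u : ℝ => (u ^ 2 / 2) • A)
            (((2:ℕ) * u ^ 1 / 2) • A) u :=
          ((hasDerivAt_pow 2 u).div_const 2).smul_const A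
        have h1 : HasDerivAt (fun u : ℝ => X u - x0 - (u ^ 2 / 2) • A)
            (deriv X u - ((2:ℕ) * u ^ 1 / 2) • A) u :=
          (((hXd u (lt_of_lt_of_le hs hu.1)).sub_const x0).sub hpow)
        have h2 : ((2:ℕ) * u ^ 1 / 2 : ℝ) = u := by push_cast; ring
        rw [h2] at h1
        exact h1.hasDerivWithinAt
      have hbd : ∀ u ∈ Set.Icc s t, ‖deriv X u - u • A‖ ≤ ε * t := by
        intro u hu
        have hu0 : 0 < u := lt_of_lt_of_le hs hu.1
        calc ‖deriv X u - u • A‖ ≤ ε * u := claim1 u hu0 (lt_of_le_of_lt hu.2 htδ)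
          _ ≤ ε * t := mul_le_mul_of_nonneg_left hu.2 hε.le
      have := (convex_Icc s t).norm_image_sub_le_of_norm_hasDerivWithin_le hder hbd
        (Set.left_mem_Icc.2 (le_of_lt hst)) (Set.right_mem_Icc.2 (le_of_lt hst))
      rwa [Real.norm_eq_abs, abs_of_pos (sub_pos.2 hst)] at this
    have hlhs : Tendsto (fun s : ℝ =>
        ‖(X t - x0 - (t ^ 2 / 2) • A) - (X s - x0 - (s ^ 2 / 2) • A)‖)
        (𝓝[>] (0:ℝ)) (𝓝 ‖X t - x0 - (t ^ 2 / 2) • A‖) := by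
      have hsA : Tendsto (fun s : ℝ => X s - x0 - (s ^ 2 / 2) • A) (𝓝[>] (0:ℝ)) (𝓝 0) := by
        have h2 : Tendsto (fun s : ℝ => (s ^ 2 / 2) • A) (𝓝[>] (0:ℝ))
            (𝓝 (((0:ℝ) ^ 2 / 2) • A)) :=
          (((continuous_pow 2).div_const 2).smul continuous_const).tendsto 0
            |>.mono_left nhdsWithin_le_nhds
        have h3 := (hX0.sub (tendsto_const_nhds (x := x0))).sub h2
        simpa using h3
      have := (tendsto_const_nhds (x := X t - x0 - (t ^ 2 / 2) • A)).sub hsA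
      simpa using this.norm
    have hrhs : Tendsto (fun s : ℝ => (ε * t) * (t - s)) (𝓝[>] (0:ℝ)) (𝓝 ((ε * t) * t)) := by
      have : Tendsto (fun s : ℝ => (ε * t) * (t - s)) (𝓝 (0:ℝ)) (𝓝 ((ε * t) * (t - 0))) :=
        (tendsto_const_nhds.mul (tendsto_const_nhds.sub tendsto_id))
      simpa using this.mono_left nhdsWithin_le_nhds
    have hfin := le_of_tendsto_of_tendsto hlhs hrhs (by
      filter_upwards [Ioo_mem_nhdsGT_of_mem (Set.left_mem_Ico.2 ht)] with s hs
      exact mvt2 s hs.1 hs.2)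
    calc ‖X t - x0 - (t ^ 2 / 2) • A‖ ≤ (ε * t) * t := hfin
      _ = ε * t ^ 2 := by ring
  -- (1/t) • deriv X t → A
  have hquot : Tendsto (fun t : ℝ => t⁻¹ • deriv X t) (𝓝[>] (0:ℝ)) (𝓝 A) := by
    rw [Metric.tendsto_nhdsWithin_nhds]
    intro ε hε
    obtain ⟨δ, hδ, hkey⟩ := key (ε / 2) (by positivity)
    refine ⟨δ, hδ, ?_⟩
    intro t ht hdist
    have ht0 : 0 < t := ht
    have htδ : t < δ := by rwa [Real.dist_eq, sub_zero, abs_of_pos ht0] at hdist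
    have h1 := (hkey t ht0 htδ).1
    rw [dist_eq_norm]
    have heq : t⁻¹ • deriv X t - A = t⁻¹ • (deriv X t - t • A) := by
      rw [smul_sub, smul_smul, inv_mul_cancel₀ (ne_of_gt ht0), one_smul]
    rw [heq, norm_smul, Real.norm_eq_abs, abs_of_pos (inv_pos.2 ht0)]
    calc t⁻¹ * ‖deriv X t - t • A‖ ≤ t⁻¹ * (ε / 2 * t) := by
          exact mul_le_mul_of_nonneg_left h1 (inv_pos.2 ht0).le
      _ = ε / 2 := by field_simp
      _ < ε := by linarith
  -- identify A
  have hAid : A = -(1 / 4 : ℝ) • g := by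
    have hODE' : ∀ᶠ t in 𝓝[>] (0:ℝ),
        deriv (deriv X) t = -((3:ℝ) • (t⁻¹ • deriv X t)) - gradient f (X t) := by
      filter_upwards [self_mem_nhdsWithin] with t ht
      have h := hODE t ht
      have h3 : (3 / t : ℝ) • deriv X t = (3:ℝ) • (t⁻¹ • deriv X t) := by
        rw [smul_smul]; norm_num [div_eq_mul_inv]
      rw [add_assoc] at h
      rw [eq_neg_of_add_eq_zero_left h, h3]
      abel
    have hrhs : Tendsto (fun t : ℝ => -((3:ℝ) • (t⁻¹ • deriv X t)) - gradient f (X t))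
        (𝓝[>] (0:ℝ)) (𝓝 (-((3:ℝ) • A) - g)) := by
      exact ((hquot.const_smul (3:ℝ)).neg).sub ((hgradcont.tendsto x0).comp hX0)
    have hAeq : A = -((3:ℝ) • A) - g :=
      tendsto_nhds_unique (hA.congr' hODE') hrhs
    have h4 : (4:ℝ) • A = -g := by
      have : A + (3:ℝ) • A = -g := by
        nth_rewrite 1 [hAeq]; abel
      calc (4:ℝ) • A = (1 + 3 : ℝ) • A := by norm_num
        _ = (1:ℝ) • A + (3:ℝ) • A := add_smul 1 3 A
        _ = A + (3:ℝ) • A := by rw [one_smul]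
        _ = -g := this
    have : A = (4:ℝ)⁻¹ • ((4:ℝ) • A) := by
      rw [smul_smul]; norm_num
    rw [this, h4, smul_neg, ← neg_smul]
    norm_num
  refine ⟨hAid, ?_⟩
  -- little-o part
  rw [isLittleO_iff]
  intro c hc
  obtain ⟨δ, hδ, hkey⟩ := key c hc
  filter_upwards [Ioo_mem_nhdsGT_of_mem (Set.left_mem_Ico.2 hδ)] with t ht
  have h2 := (hkey t ht.1 ht.2).2
  have heq : X t - x0 + (t ^ 2 / 8) • g = X t - x0 - (t ^ 2 / 2) • A := by
    rw [hAid, smul_smul]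
    have h8 : t ^ 2 / 2 * -(1 / 4 : ℝ) = -(t ^ 2 / 8) := by ring
    rw [h8, neg_smul, sub_neg_eq_add]
  rw [heq]
  calc ‖X t - x0 - (t ^ 2 / 2) • A‖ ≤ c * t ^ 2 := h2
    _ = c * ‖t ^ 2‖ := by rw [Real.norm_eq_abs, abs_of_nonneg (sq_nonneg t)]
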